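/- Let p, q be natural numbers with 0 < q < p, and let Z ⊆ ℂ⁴ be the set of z = (z₁,z₂,z₃,z₄) with (p−q)·|z₁|² + (p+q)·|z₂|² = 1/2 and |z₃|² + |z₄|² = 1/(2p). The circle group {w ∈ ℂ : |w| = 1} acts on ℂ⁴ by w • z = (w^{p−q}·z₁, w^{p+q}·z₂, w^{−p}·z₃, w^{−p}·z₄) (integer powers). Then this action restricted to Z is free — i.e. for every w with |w| = 1 and every z ∈ Z, w • z = z implies w = 1 — if and only if gcd(p,q) = 1. (This is the freeness claim in Section 4.1 of the paper, used in the contact reduction of S⁷ producing the toric contact structures Y^{p,q} on S² × S³.) -/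

import Mathlib

private lemma zpow_eq_one_of_dvd {w : ℂ} {d : ℕ} (hw : w ^ d = 1) {m : ℤ}
    (h : (d : ℤ) ∣ m) : w ^ m = 1 := by
  obtain ⟨k, rfl⟩ := h
  rw [zpow_mul, zpow_natCast, hw, one_zpow]

/-- Section 4.1: the circle action
`w • z = (w^{p−q}z₁, w^{p+q}z₂, w^{−p}z₃, w^{−p}z₄)` restricted to the zero
set `Z` of the moment map (given by the two displayed equations) is free if
and only if `gcd(p,q) = 1`. -/
theorem stmt_17 (p q : ℕ) (hq : 0 < q) (hqp : q < p) :
    (∀ w : ℂ, ‖w‖ = 1 →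
      ∀ z₁ z₂ z₃ z₄ : ℂ,
        ((p : ℝ) - q) * ‖z₁‖ ^ 2 +
          ((p : ℝ) + q) * ‖z₂‖ ^ 2 = 1 / 2 →
        ‖z₃‖ ^ 2 + ‖z₄‖ ^ 2 = 1 / (2 * p) →
        (w ^ ((p : ℤ) - q) * z₁ = z₁ ∧ w ^ ((p : ℤ) + q) * z₂ = z₂ ∧
          w ^ (-(p : ℤ)) * z₃ = z₃ ∧ w ^ (-(p : ℤ)) * z₄ = z₄) →
        w = 1) ↔ Nat.gcd p q = 1 := by
  have hp : 0 < p := hq.trans hqp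
  have hpq : 0 < p - q := Nat.sub_pos_of_lt hqp
  constructor
  · intro hfree
    by_contra hgcd
    set d := Nat.gcd p q with hd
    have hd1 : 1 < d := by
      have hd0 : 0 < d := Nat.gcd_pos_of_pos_left q hp
      omega
    have hd0 : d ≠ 0 := by omega
    have hprim : IsPrimitiveRoot (Complex.exp (2 * Real.pi * Complex.I / d)) d :=
      Complex.isPrimitiveRoot_exp d hd0
    set w := Complex.exp (2 * Real.pi * Complex.I / d) with hw
    have hwd : w ^ d = 1 := hprim.pow_eq_one
    have hwne : w ≠ 1 := by
      have := hprim.pow_ne_one_of_pos_of_lt (l := 1) one_ne_zero hd1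
      simpa using this
    have hwabs : ‖w‖ = 1 := by
      rw [hw, Complex.norm_exp]
      have : (2 * Real.pi * Complex.I / d).re = 0 := by
        simp [Complex.div_re, Complex.mul_re]
      rw [this, Real.exp_zero]
    -- pick the point
    set a : ℂ := (Real.sqrt (1 / (2 * ((p : ℝ) - q))) : ℂ) with ha
    set c : ℂ := (Real.sqrt (1 / (2 * (p : ℝ))) : ℂ) with hc
    have hpqR : (0 : ℝ) < (p : ℝ) - q := by
      have : (q : ℝ) < p := by exact_mod_cast hqp
      linarith
    have hpR : (0 : ℝ) < (p : ℝ) := by exact_mod_cast hp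
    have habs_a : ‖a‖ ^ 2 = 1 / (2 * ((p : ℝ) - q)) := by
      rw [ha, Complex.norm_real, Real.norm_eq_abs, sq_abs, Real.sq_sqrt (by positivity)]
    have habs_c : ‖c‖ ^ 2 = 1 / (2 * (p : ℝ)) := by
      rw [hc, Complex.norm_real, Real.norm_eq_abs, sq_abs, Real.sq_sqrt (by positivity)]
    have e1 : ((p : ℝ) - q) * ‖a‖ ^ 2 +
        ((p : ℝ) + q) * ‖(0 : ℂ)‖ ^ 2 = 1 / 2 := by
      rw [habs_a]; simp; field_simp
    have e2 : ‖c‖ ^ 2 + ‖(0 : ℂ)‖ ^ 2 = 1 / (2 * p) := by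
      rw [habs_c]; simp
    have hdvd1 : (d : ℤ) ∣ (p : ℤ) - q := by
      exact dvd_sub (Int.natCast_dvd_natCast.mpr (Nat.gcd_dvd_left p q))
        (Int.natCast_dvd_natCast.mpr (Nat.gcd_dvd_right p q))
    have hdvd2 : (d : ℤ) ∣ -(p : ℤ) :=
      dvd_neg.mpr (Int.natCast_dvd_natCast.mpr (Nat.gcd_dvd_left p q))
    have := hfree w hwabs a 0 c 0 e1 e2
      ⟨by rw [zpow_eq_one_of_dvd hwd hdvd1, one_mul], by rw [mul_zero],
       by rw [zpow_eq_one_of_dvd hwd hdvd2, one_mul], by rw [mul_zero]⟩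
    exact hwne this
  · intro hgcd w hwabs z₁ z₂ z₃ z₄ h1 h2 ⟨e1, e2, e3, e4⟩
    have hw0 : w ≠ 0 := by
      intro h; rw [h] at hwabs; simp at hwabs
    have key : ∀ (m : ℤ) (z : ℂ), z ≠ 0 → w ^ m * z = z → w ^ m = 1 := by
      intro m z hz h
      have := mul_right_cancel₀ hz (h.trans (one_mul z).symm)
      exact this
    -- w^p = 1
    have h34 : z₃ ≠ 0 ∨ z₄ ≠ 0 := by
      by_contra h
      push_neg at h
      rw [h.1, h.2] at h2
      simp at h2
      have : (0:ℝ) < 1 / (2 * p) := by positivity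
      linarith [h2]
    have hwp : w ^ ((p : ℤ)) = 1 := by
      have hneg : w ^ (-(p : ℤ)) = 1 := by
        rcases h34 with h | h
        · exact key _ _ h e3
        · exact key _ _ h e4
      rw [zpow_neg, inv_eq_one] at hneg
      exact hneg
    -- w^q = 1
    have h12 : z₁ ≠ 0 ∨ z₂ ≠ 0 := by
      by_contra h
      push_neg at h
      rw [h.1, h.2] at h1
      simp at h1
    have hwq : w ^ ((q : ℤ)) = 1 := by
      rcases h12 with h | h
      · have := key _ _ h e1
        have : w ^ ((q : ℤ)) = w ^ ((p : ℤ)) / w ^ ((p : ℤ) - q) := by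
          rw [← zpow_sub₀ hw0]; ring_nf
        rw [this, hwp, key _ _ h e1, div_one]
      · have : w ^ ((q : ℤ)) = w ^ ((p : ℤ) + q) / w ^ ((p : ℤ)) := by
          rw [← zpow_sub₀ hw0]; ring_nf
        rw [this, hwp, key _ _ h e2, div_one]
    -- Bezout
    have hbez : (1 : ℤ) = p * Nat.gcdA p q + q * Nat.gcdB p q := by
      have := Nat.gcd_eq_gcd_ab p q
      rw [hgcd] at this
      exact_mod_cast this
    calc w = w ^ (1 : ℤ) := (zpow_one w).symm
      _ = w ^ ((p : ℤ) * Nat.gcdA p q + (q : ℤ) * Nat.gcdB p q) := by rw [← hbez]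
      _ = (w ^ ((p : ℤ))) ^ Nat.gcdA p q * (w ^ ((q : ℤ))) ^ Nat.gcdB p q := by
          rw [zpow_add₀ hw0, zpow_mul, zpow_mul]
      _ = 1 := by rw [hwp, hwq, one_zpow, one_zpow, one_mul]
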